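/- For all natural numbers n ≥ 2 and r with 1 ≤ r ≤ n-1, f(n,r) = f(n,n-r), where f(n,r) = 1 + ∑_{k=1}^{r} ∑_{h=k+1}^{k+n-r} C(n,h)·C(h,k) and C(a,b) denotes the binomial coefficient 'a choose b'. -/

import Mathlib

def f (n r : ℕ) : ℕ :=
  1 + ∑ k ∈ Finset.Icc 1 r, ∑ h ∈ Finset.Icc (k + 1) (k + n - r), Nat.choose n h * Nat.choose h k

lemma choose_swap (n k j : ℕ) :
    Nat.choose n k * Nat.choose (n - k) j = Nat.choose n j * Nat.choose (n - j) k := by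
  by_cases h : k + j ≤ n
  · have h1 : k ≤ k + j := Nat.le_add_right _ _
    have h2 : j ≤ k + j := Nat.le_add_left _ _
    have e1 := Nat.choose_mul (n := n) (s := k) h1
    have e2 := Nat.choose_mul (n := n) (s := j) h2
    simp only [Nat.add_sub_cancel_left, Nat.add_sub_cancel] at e1 e2
    rw [← e1, ← e2]
    congr 1
    rw [← Nat.choose_symm h2]
    congr 1
    omega
  · push_neg at h
    by_cases hk : k ≤ n
    · by_cases hj : j ≤ n
      · rw [Nat.choose_eq_zero_of_lt (by omega : n - k < j),
          Nat.choose_eq_zero_of_lt (by omega : n - j < k)]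
        simp
      · rw [Nat.choose_eq_zero_of_lt (by omega : n < j),
          Nat.choose_eq_zero_of_lt (by omega : n - k < j)]
        simp
    · rw [Nat.choose_eq_zero_of_lt (by omega : n < k),
        Nat.choose_eq_zero_of_lt (by omega : n - j < k)]
      simp

lemma f_eq (n r : ℕ) (hr : r ≤ n) :
    f n r = 1 + ∑ k ∈ Finset.Icc 1 r, ∑ j ∈ Finset.Icc 1 (n - r),
      Nat.choose n k * Nat.choose (n - k) j := by
  unfold f
  congr 1
  refine Finset.sum_congr rfl fun k hk => ?_
  have : k + n - r = k + (n - r) := by omega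
  rw [this]
  rw [show Finset.Icc (k + 1) (k + (n - r)) = (Finset.Icc 1 (n - r)).map
      ⟨(k + ·), add_right_injective k⟩ by
    ext x
    simp [Finset.mem_map, Function.Embedding.coeFn_mk]
    constructor
    · rintro ⟨h1, h2⟩; exact ⟨x - k, ⟨by omega, by omega⟩, by omega⟩
    · rintro ⟨a, ⟨h1, h2⟩, rfl⟩; omega]
  rw [Finset.sum_map]
  refine Finset.sum_congr rfl fun j hj => ?_
  simp only [Function.Embedding.coeFn_mk]
  have hkj : k ≤ k + j := Nat.le_add_right _ _
  by_cases h : k + j ≤ n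
  · have := Nat.choose_mul (n := n) hkj
    simpa [Nat.add_sub_cancel_left] using this
  · rw [Nat.choose_eq_zero_of_lt (by omega : n < k + j)]
    by_cases hk : k ≤ n
    · rw [Nat.choose_eq_zero_of_lt (by omega : n - k < j)]; simp
    · rw [Nat.choose_eq_zero_of_lt (by omega : n < k)]; simp

theorem f_symm (n r : ℕ) (hn : 2 ≤ n) (hr1 : 1 ≤ r) (hr2 : r ≤ n - 1) :
    f n r = f n (n - r) := by
  have h1 : r ≤ n := by omega
  have h2 : n - r ≤ n := Nat.sub_le _ _
  have h3 : n - (n - r) = r := by omega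
  rw [f_eq n r h1, f_eq n (n - r) h2, h3]
  congr 1
  rw [Finset.sum_comm]
  exact Finset.sum_congr rfl fun j _ => Finset.sum_congr rfl fun k _ => choose_swap n k j
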